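/- Let Ω ⊆ ℝ^d be an open, connected and simply connected set, and let Q : Ω → M₃(ℝ) be continuous with Q(x) ∈ 𝒬 for all x ∈ Ω. Then there exists a continuous map n : Ω → 𝕊² with Q(x) = P(n(x)) for all x ∈ Ω. -/

import Mathlib

open Matrix Set unitInterval Topology

namespace Stmt6Aux

noncomputable section

abbrev E3 := EuclideanSpace ℝ (Fin 3)

/-- A coercion helper. -/
def mkE3 (f : Fin 3 → ℝ) : E3 := WithLp.toLp 2 f

@[simp] lemma mkE3_apply (f : Fin 3 → ℝ) (i : Fin 3) : mkE3 f i = f i := rfl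

def dot3 (v w : E3) : ℝ := ∑ i, v i * w i

def outer3 (v : E3) : Matrix (Fin 3) (Fin 3) ℝ :=
  Matrix.vecMulVec (fun i => v i) (fun i => v i)

lemma continuous_apply3 (i : Fin 3) : Continuous fun v : E3 => v i := PiLp.continuous_apply 2 _ i

lemma dot3_comm (v w : E3) : dot3 v w = dot3 w v :=
  Finset.sum_congr rfl fun i _ => mul_comm _ _

lemma smul_apply3 (c : ℝ) (v : E3) (i : Fin 3) : (c • v) i = c * v i := rfl

lemma dot3_smul_right (c : ℝ) (v w : E3) : dot3 v (c • w) = c * dot3 v w := by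
  unfold dot3; rw [Finset.mul_sum]
  exact Finset.sum_congr rfl fun i _ => by rw [smul_apply3]; ring

lemma dot3_smul_left (c : ℝ) (v w : E3) : dot3 (c • v) w = c * dot3 v w := by
  rw [dot3_comm, dot3_smul_right, dot3_comm]

lemma dot3_self (v : E3) : dot3 v v = ‖v‖ ^ 2 := by
  rw [EuclideanSpace.norm_eq, Real.sq_sqrt (by positivity)]
  exact Finset.sum_congr rfl fun i _ => by rw [Real.norm_eq_abs, sq_abs, sq]

lemma dot3_self_one {v : E3} (h : ‖v‖ = 1) : dot3 v v = 1 := by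
  rw [dot3_self, h, one_pow]

lemma outer3_apply (v : E3) (i j : Fin 3) : outer3 v i j = v i * v j :=
  Matrix.vecMulVec_apply _ _ _ _

lemma outer3_smul (c : ℝ) (v : E3) : outer3 (c • v) = (c * c) • outer3 v := by
  ext i j
  simp only [outer3_apply, Matrix.smul_apply, smul_apply3, smul_eq_mul]
  ring

lemma eq_smul_of_outer3_eq {m v : E3} (hm : ‖m‖ = 1) (hv : ‖v‖ = 1)
    (h : outer3 m = outer3 v) : v = dot3 m v • m ∧ (dot3 m v = 1 ∨ dot3 m v = -1) := by
  have hij : ∀ i j, m i * m j = v i * v j := by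
    intro i j
    have := congrArg (fun A => A i j) h
    simpa only [outer3_apply] using this
  have hvv : dot3 v v = 1 := dot3_self_one hv
  have hveq : v = dot3 m v • m := by
    ext i
    show v i = dot3 m v * m i
    have h1 : dot3 m v * m i = ∑ j, v i * (v j * v j) := by
      unfold dot3
      rw [Finset.sum_mul]
      exact Finset.sum_congr rfl fun j _ => by linear_combination v j * hij i j
    rw [h1, ← Finset.mul_sum]
    have h2 : (∑ j, v j * v j) = 1 := hvv
    rw [h2, mul_one]
  have hcc : dot3 m v * dot3 m v = 1 := by
    have h3 := hvv
    nth_rewrite 1 [hveq] at h3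
    nth_rewrite 2 [hveq] at h3
    rw [dot3_smul_left, dot3_smul_right, dot3_self_one hm, mul_one] at h3
    exact h3
  exact ⟨hveq, mul_self_eq_one_iff.mp hcc⟩

section Lifting

variable {X : Type*} [TopologicalSpace X]

/-- `v` is a unit vector whose outer product matrix is `M x`. -/
def Lifts (M : X → Matrix (Fin 3) (Fin 3) ℝ) (v : E3) (x : X) : Prop :=
  ‖v‖ = 1 ∧ M x = outer3 v

lemma Lifts.smul {M : X → Matrix (Fin 3) (Fin 3) ℝ} {v : E3} {x : X}
    (h : Lifts M v x) {c : ℝ} (hc : c = 1 ∨ c = -1) : Lifts M (c • v) x := by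
  have hcc : c * c = 1 := by rcases hc with rfl|rfl <;> norm_num
  constructor
  · rw [norm_smul, h.1, mul_one, Real.norm_eq_abs]
    rcases hc with rfl|rfl <;> norm_num
  · rw [outer3_smul, hcc, one_smul]; exact h.2

lemma lifts_unique {M : X → Matrix (Fin 3) (Fin 3) ℝ} {v w : E3} {x : X}
    (h1 : Lifts M v x) (h2 : Lifts M w x) :
    w = dot3 v w • v ∧ (dot3 v w = 1 ∨ dot3 v w = -1) :=
  eq_smul_of_outer3_eq h1.1 h2.1 (h1.2.symm.trans h2.2)

lemma sign_const {Y : Type*} [TopologicalSpace Y] {A : Set Y} (hA : IsPreconnected A)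
    {f : Y → ℝ} (hf : ContinuousOn f A) (hv : ∀ x ∈ A, f x = 1 ∨ f x = -1)
    {a b : Y} (ha : a ∈ A) (hb : b ∈ A) : f a = f b := by
  by_contra hne
  have h0 : ∃ x ∈ A, f x = 0 := by
    rcases hv a ha with h1|h1 <;> rcases hv b hb with h2|h2
    · exact absurd (h1.trans h2.symm) hne
    · have hmem : (0:ℝ) ∈ Icc (f b) (f a) := by rw [h1, h2]; constructor <;> norm_num
      exact hA.intermediate_value hb ha hf hmem
    · have hmem : (0:ℝ) ∈ Icc (f a) (f b) := by rw [h1, h2]; constructor <;> norm_num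
      exact hA.intermediate_value ha hb hf hmem
    · exact absurd (h1.trans h2.symm) hne
  obtain ⟨x, hxA, hfx⟩ := h0
  rcases hv x hxA with h|h <;> rw [hfx] at h <;> norm_num at h

lemma isPreconnected_coe_preimage {J : Set ℝ} (hJ : J.OrdConnected) :
    IsPreconnected ((fun t : I => (t : ℝ)) ⁻¹' J) := by
  have h1 := (IsInducing.subtypeVal (t := unitInterval)).isPreconnected_image
    (s := ((fun t : I => (t : ℝ)) ⁻¹' J))
  rw [← h1, Subtype.image_preimage_coe]
  exact (Set.OrdConnected.inter Set.ordConnected_Icc hJ).isPreconnected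

lemma continuousOn_dot3 {Y : Type*} [TopologicalSpace Y] {A : Set Y} {f g : Y → E3}
    (hf : ContinuousOn f A) (hg : ContinuousOn g A) :
    ContinuousOn (fun y => dot3 (f y) (g y)) A := by
  unfold dot3
  apply continuousOn_finset_sum
  intro i _
  exact ((continuous_apply3 i).comp_continuousOn hf).mul
    ((continuous_apply3 i).comp_continuousOn hg)

/-- A local lift of `M` on an open set `U`. -/
def LocalLift (M : X → Matrix (Fin 3) (Fin 3) ℝ) (U : Set X) (g : X → E3) : Prop :=
  IsOpen U ∧ ContinuousOn g U ∧ ∀ x ∈ U, Lifts M (g x) x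

variable {M : X → Matrix (Fin 3) (Fin 3) ℝ}

lemma continuous_entry (hMc : Continuous M) (i j : Fin 3) :
    Continuous fun x => M x i j :=
  (continuous_apply j).comp ((continuous_apply i).comp hMc)

lemma exists_localLift (hMc : Continuous M)
    (hval : ∀ x, ∃ m : E3, ‖m‖ = 1 ∧ M x = outer3 m) (x : X) :
    ∃ U g, LocalLift M U g ∧ x ∈ U := by
  obtain ⟨m, hm1, hm2⟩ := hval x
  have hmm : dot3 m m = 1 := dot3_self_one hm1
  have hex : ∃ i, m i ≠ 0 := by
    by_contra h
    push_neg at h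
    have : dot3 m m = 0 := by unfold dot3; simp [h]
    rw [this] at hmm; norm_num at hmm
  obtain ⟨i, hi⟩ := hex
  refine ⟨{y | 0 < M y i i}, fun y => (Real.sqrt (M y i i))⁻¹ • mkE3 (fun k => M y k i),
    ⟨?_, ?_, ?_⟩, ?_⟩
  · exact isOpen_lt continuous_const (continuous_entry hMc i i)
  · apply ContinuousOn.fun_smul
    · apply ContinuousOn.inv₀
      · exact (Real.continuous_sqrt.comp (continuous_entry hMc i i)).continuousOn
      · exact fun y hy => ne_of_gt (Real.sqrt_pos.mpr hy)
    · exact ((PiLp.continuous_toLp 2 _).comp (continuous_pi fun k => continuous_entry hMc k i)).continuousOn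
  · intro y hy
    obtain ⟨v, hv1, hv2⟩ := hval y
    have hcol : ∀ k, M y k i = v k * v i := fun k => by rw [hv2]; exact outer3_apply v k i
    have hyii : M y i i = v i * v i := hcol i
    have hvi : v i ≠ 0 := by
      intro h
      have hy' : 0 < M y i i := hy
      rw [hyii, h, mul_zero] at hy'
      exact lt_irrefl 0 hy'
    have habs : |v i| ≠ 0 := abs_ne_zero.mpr hvi
    set sg : ℝ := v i / |v i| with hsg
    have hsgpm : sg = 1 ∨ sg = -1 := by
      rcases lt_or_gt_of_ne hvi with h|h
      · right; rw [hsg, abs_of_neg h]; field_simp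
      · left; rw [hsg, abs_of_pos h]; field_simp
    have hsq : Real.sqrt (M y i i) = |v i| := by
      rw [hyii]; exact Real.sqrt_mul_self_eq_abs _
    have hfun : mkE3 (fun k => M y k i) = v i • v := by
      ext k
      show M y k i = v i * v k
      rw [hcol k]; ring
    have heq : (Real.sqrt (M y i i))⁻¹ • mkE3 (fun k => M y k i) = sg • v := by
      rw [hsq, hfun, smul_smul, hsg, div_eq_mul_inv, mul_comm]
    show Lifts M ((Real.sqrt (M y i i))⁻¹ • mkE3 (fun k => M y k i)) y
    rw [heq]
    exact Lifts.smul ⟨hv1, hv2⟩ hsgpm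
  · show 0 < M x i i
    rw [hm2, outer3_apply]
    exact mul_self_pos.mpr hi

lemma exists_chain (hMc : Continuous M) (hval : ∀ x, ∃ m : E3, ‖m‖ = 1 ∧ M x = outer3 m)
    {H : I × I → X} (hH : Continuous H) (u₀ : I) :
    ∃ N : ℕ, 0 < N ∧ ∃ r : ℝ, 0 < r ∧ ∃ (U : ℕ → Set X) (g : ℕ → X → E3),
      ∀ k, k < N → LocalLift M (U k) (g k) ∧
        ∀ u : I, dist u u₀ < r → ∀ t : I, (k : ℝ)/N ≤ (t:ℝ) → (t:ℝ) ≤ ((k:ℝ)+1)/N →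
          H (t, u) ∈ U k := by
  choose Us gs h using fun p : I × I => exists_localLift hMc hval (H p)
  have hopen : ∀ p, IsOpen (H ⁻¹' (Us p)) := fun p => (h p).1.1.preimage hH
  have hcov : (univ : Set (I × I)) ⊆ ⋃ p, H ⁻¹' (Us p) := fun q _ =>
    mem_iUnion.mpr ⟨q, (h q).2⟩
  obtain ⟨δ, hδ, hball⟩ := lebesgue_number_lemma_of_metric isCompact_univ hopen hcov
  choose idx hidx using fun p : I × I => hball p (mem_univ p)
  obtain ⟨n, hn⟩ := exists_nat_one_div_lt (half_pos hδ)
  set N : ℕ := n + 1 with hNdef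
  have hN0 : (0:ℝ) < N := by positivity
  have hmesh : 1/(N:ℝ) < δ/2 := by
    have : ((n:ℝ) + 1) = (N:ℝ) := by push_cast [hNdef]; ring
    rwa [this] at hn
  set pt : ℕ → I × I := fun k => (projIcc 0 1 zero_le_one ((k:ℝ)/N), u₀) with hpt
  refine ⟨N, Nat.succ_pos n, δ/2, half_pos hδ, fun k => Us (idx (pt k)),
    fun k => gs (idx (pt k)), fun k hk => ⟨(h _).1, ?_⟩⟩
  intro u hu t ht1 ht2
  apply hidx (pt k)
  rw [Metric.mem_ball, Prod.dist_eq]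
  have hkN : (k:ℝ)/N ∈ Icc (0:ℝ) 1 := by
    constructor
    · positivity
    · rw [div_le_one hN0]; exact_mod_cast hk.le
  apply max_lt
  · have hco : ((pt k).1 : ℝ) = (k:ℝ)/N := by
      rw [hpt]
      simp only
      rw [projIcc_of_mem zero_le_one hkN]
    rw [Subtype.dist_eq, hco, Real.dist_eq]
    have hsplit : ((k:ℝ)+1)/N = (k:ℝ)/N + 1/N := add_div _ _ _
    have habs : |(t:ℝ) - (k:ℝ)/N| ≤ 1/(N:ℝ) := by
      rw [abs_le]
      constructor
      · have h1N : (0:ℝ) ≤ 1/N := by positivity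
        linarith
      · rw [hsplit] at ht2; linarith
    linarith
  · exact lt_of_lt_of_le hu (by linarith)

lemma exists_pathLift (hMc : Continuous M)
    (hval : ∀ x, ∃ m : E3, ‖m‖ = 1 ∧ M x = outer3 m)
    {γ : I → X} (hγ : Continuous γ) {v₀ : E3} (h0 : Lifts M v₀ (γ 0)) :
    ∃ L : I → E3, Continuous L ∧ L 0 = v₀ ∧ ∀ t, Lifts M (L t) (γ t) := by
  obtain ⟨N, hN, r, hr, U, g, hchain⟩ :=
    exists_chain hMc hval (H := fun q : I × I => γ q.1) (hγ.comp continuous_fst) 0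
  have hN0 : (0:ℝ) < N := by exact_mod_cast hN
  have hch : ∀ k, k < N → LocalLift M (U k) (g k) ∧
      ∀ t : I, (k:ℝ)/N ≤ (t:ℝ) → (t:ℝ) ≤ ((k:ℝ)+1)/N → γ t ∈ U k := by
    intro k hk
    exact ⟨(hchain k hk).1, fun t h1 h2 =>
      (hchain k hk).2 0 (by rw [dist_self]; exact hr) t h1 h2⟩
  have key : ∀ k, k ≤ N → ∃ L : I → E3, Continuous L ∧ L 0 = v₀ ∧
      ∀ t : I, (t:ℝ) ≤ (k:ℝ)/N → Lifts M (L t) (γ t) := by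
    intro k
    induction k with
    | zero =>
      intro _
      refine ⟨fun _ => v₀, continuous_const, rfl, fun t ht => ?_⟩
      have ht0 : t = 0 := by
        apply Subtype.ext
        have : (t:ℝ) ≤ 0 := by simpa using ht
        exact le_antisymm this t.2.1
      rw [ht0]; exact h0
    | succ k ih =>
      intro hk1
      obtain ⟨L, hLc, hL0, hLl⟩ := ih (Nat.le_of_succ_le hk1)
      have hkN : k < N := Nat.lt_of_succ_le hk1
      obtain ⟨⟨hUo, hgc, hgl⟩, hmem⟩ := hch k hkN
      set a : ℝ := (k:ℝ)/N with ha
      set bb : ℝ := ((k:ℝ)+1)/N with hbb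
      have ha0 : 0 ≤ a := by positivity
      have hab : a ≤ bb := by
        rw [ha, hbb]; gcongr; linarith
      have hb1 : bb ≤ 1 := by
        rw [hbb, div_le_one hN0]
        have : ((k+1:ℕ):ℝ) ≤ (N:ℝ) := by exact_mod_cast hk1
        push_cast at this
        linarith
      set tk : I := ⟨a, ha0, le_trans hab hb1⟩ with htk
      have htkl : Lifts M (L tk) (γ tk) := hLl tk le_rfl
      have htkU : γ tk ∈ U k := hmem tk le_rfl hab
      have hgtk : Lifts M (g k (γ tk)) (γ tk) := hgl _ htkU
      obtain ⟨hLeq, hsgpm⟩ := lifts_unique hgtk htkl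
      set sg : ℝ := dot3 (g k (γ tk)) (L tk) with hsg
      set cl : I → I := fun t => ⟨max a (min (t:ℝ) bb),
        le_trans ha0 (le_max_left _ _),
        max_le (le_trans hab hb1) (le_trans (min_le_right _ _) hb1)⟩ with hcl
      have hclc : Continuous cl :=
        Continuous.subtype_mk (continuous_const.max (continuous_subtype_val.min continuous_const)) _
      have hclmem : ∀ t, γ (cl t) ∈ U k := fun t =>
        hmem (cl t) (le_max_left _ _) (max_le hab (min_le_right _ _))
      set L' : I → E3 := fun t => if (t:ℝ) ≤ a then L t else sg • g k (γ (cl t)) with hL'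
      have hgc' : Continuous fun t : I => sg • g k (γ (cl t)) :=
        (hgc.comp_continuous (hγ.comp hclc) hclmem).const_smul sg
      have hL'c : Continuous L' := by
        apply Continuous.if_le hLc hgc' continuous_subtype_val continuous_const
        intro t ht
        have htt : t = tk := Subtype.ext ht
        have hclt : cl tk = tk := by
          apply Subtype.ext
          show max a (min a bb) = a
          rw [min_eq_left hab, max_self]
        rw [htt]
        show L tk = sg • g k (γ (cl tk))
        rw [hclt]
        exact hLeq
      refine ⟨L', hL'c, ?_, ?_⟩
      · show (if ((0:I):ℝ) ≤ a then L 0 else sg • g k (γ (cl 0))) = v₀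
        rw [if_pos (by exact_mod_cast ha0 : ((0:I):ℝ) ≤ a)]
        exact hL0
      · intro t ht
        have htb : (t:ℝ) ≤ bb := by
          rw [hbb]
          have : ((k+1:ℕ):ℝ) = (k:ℝ)+1 := by push_cast; ring
          rw [← this]; exact ht
        by_cases hta : (t:ℝ) ≤ a
        · show Lifts M (if (t:ℝ) ≤ a then L t else sg • g k (γ (cl t))) (γ t)
          rw [if_pos hta]
          exact hLl t hta
        · push_neg at hta
          have hclt : cl t = t := by
            apply Subtype.ext
            show max a (min (t:ℝ) bb) = (t:ℝ)
            rw [min_eq_left htb, max_eq_right hta.le]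
          show Lifts M (if (t:ℝ) ≤ a then L t else sg • g k (γ (cl t))) (γ t)
          rw [if_neg (not_le.mpr hta), hclt]
          exact Lifts.smul (hgl _ (hmem t hta.le htb)) hsgpm
  obtain ⟨L, hLc, hL0, hLl⟩ := key N le_rfl
  refine ⟨L, hLc, hL0, fun t => hLl t ?_⟩
  rw [div_self (ne_of_gt hN0)]
  exact t.2.2


lemma lift_endpoint_eq (hMc : Continuous M)
    (hval : ∀ x, ∃ m : E3, ‖m‖ = 1 ∧ M x = outer3 m)
    {H : I × I → X} (hH : Continuous H)
    (h0 : ∀ u, H (0, u) = H (0, 0)) (h1 : ∀ u, H (1, u) = H (1, 0))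
    {v₀ : E3} (hv₀ : Lifts M v₀ (H (0,0)))
    {L₀ L₁ : I → E3}
    (hL₀c : Continuous L₀) (hL₀0 : L₀ 0 = v₀) (hL₀ : ∀ t, Lifts M (L₀ t) (H (t, 0)))
    (hL₁c : Continuous L₁) (hL₁0 : L₁ 0 = v₀) (hL₁ : ∀ t, Lifts M (L₁ t) (H (t, 1))) :
    L₀ 1 = L₁ 1 := by
  have hpreI : IsPreconnected (univ : Set I) := by
    have := isPreconnected_coe_preimage (J := univ) Set.ordConnected_univ
    simpa using this
  -- uniqueness of lifts over the same path
  have uniq : ∀ (γ : I → X) (L L' : I → E3), Continuous L → Continuous L' →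
      (∀ t, Lifts M (L t) (γ t)) → (∀ t, Lifts M (L' t) (γ t)) → L 0 = L' 0 → L 1 = L' 1 := by
    intro γ L L' hLc hL'c hL hL' h00
    have hsign := sign_const hpreI
      (f := fun t => dot3 (L t) (L' t))
      (continuousOn_dot3 hLc.continuousOn hL'c.continuousOn)
      (fun t _ => (lifts_unique (hL t) (hL' t)).2) (mem_univ 1) (mem_univ 0)
    have hsign' : dot3 (L 1) (L' 1) = dot3 (L 0) (L' 0) := hsign
    have h01 : dot3 (L 0) (L' 0) = 1 := by rw [← h00]; exact dot3_self_one (hL 0).1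
    obtain ⟨he, _⟩ := lifts_unique (hL 1) (hL' 1)
    rw [he, hsign', h01, one_smul]
  have hstart : ∀ u : I, Lifts M v₀ (H (0, u)) := fun u => by rw [h0 u]; exact hv₀
  have hcont_u : ∀ u : I, Continuous fun t => H (t, u) := fun u =>
    hH.comp (continuous_id.prodMk continuous_const)
  choose Lf hLfc hLf0 hLfl using fun u : I => exists_pathLift hMc hval (hcont_u u) (hstart u)
  set e : I → E3 := fun u => Lf u 1 with he
  -- local constancy of the endpoint
  have loc : ∀ u₀ : I, ∃ r > 0, ∀ u : I, dist u u₀ < r → e u = e u₀ := by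
    intro u₀
    obtain ⟨N, hN, r, hr, U, g, hchain⟩ := exists_chain hMc hval hH u₀
    have hN0 : (0:ℝ) < N := by exact_mod_cast hN
    refine ⟨r, hr, ?_⟩
    set W : Set I := {u : I | dist u u₀ < r} with hW
    have hWc : IsPreconnected W := by
      have hWeq : W = (fun t : I => (t:ℝ)) ⁻¹' (Metric.ball (u₀:ℝ) r) := by
        ext u
        simp [hW, Metric.mem_ball, Subtype.dist_eq, Real.dist_eq]
      rw [hWeq]
      exact isPreconnected_coe_preimage (by rw [Real.ball_eq_Ioo]; exact Set.ordConnected_Ioo)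
    have hu₀W : u₀ ∈ W := by show dist u₀ u₀ < r; rw [dist_self]; exact hr
    set tI : ℕ → I := fun k => ⟨min ((k:ℝ)/N) 1,
      le_min (by positivity) zero_le_one, min_le_right _ _⟩ with htIdef
    have htI : ∀ k, k ≤ N → ((tI k : I) : ℝ) = (k:ℝ)/N := by
      intro k hk
      show min ((k:ℝ)/N) 1 = (k:ℝ)/N
      exact min_eq_left (by rw [div_le_one hN0]; exact_mod_cast hk)
    set sig : ℕ → I → (I → E3) → ℝ :=
      fun k u L => dot3 (g k (H (tI k, u))) (L (tI k)) with hsig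
    -- on each chain interval a lift is a constant sign times the local lift
    have step1 : ∀ u ∈ W, ∀ L : I → E3, Continuous L → (∀ t, Lifts M (L t) (H (t, u))) →
        ∀ k, k < N → ∀ t : I, (k:ℝ)/N ≤ (t:ℝ) → (t:ℝ) ≤ ((k:ℝ)+1)/N →
          L t = sig k u L • g k (H (t, u)) := by
      intro u hu L hLc hLl k hk t h1t h2t
      obtain ⟨⟨hUo, hgc, hgl⟩, hmem⟩ := hchain k hk
      set A : Set I := (fun t : I => (t:ℝ)) ⁻¹' (Icc ((k:ℝ)/N) (((k:ℝ)+1)/N)) with hA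
      have hAc : IsPreconnected A := isPreconnected_coe_preimage Set.ordConnected_Icc
      have hmemA : ∀ t' ∈ A, H (t', u) ∈ U k := fun t' ht' => hmem u hu t' ht'.1 ht'.2
      have hliftsA : ∀ t' ∈ A, Lifts M (g k (H (t', u))) (H (t', u)) :=
        fun t' ht' => hgl _ (hmemA t' ht')
      have hHcont : Continuous fun t' : I => H (t', u) := hcont_u u
      have hcontA : ContinuousOn (fun t' : I => dot3 (g k (H (t', u))) (L t')) A :=
        continuousOn_dot3 (hgc.comp hHcont.continuousOn hmemA) hLc.continuousOn
      have hsgn : ∀ t' ∈ A, dot3 (g k (H (t', u))) (L t') = 1 ∨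
          dot3 (g k (H (t', u))) (L t') = -1 :=
        fun t' ht' => (lifts_unique (hliftsA t' ht') (hLl t')).2
      have htA : t ∈ A := ⟨h1t, h2t⟩
      have htkA : tI k ∈ A := by
        show ((tI k : I):ℝ) ∈ Icc ((k:ℝ)/N) (((k:ℝ)+1)/N)
        rw [htI k hk.le]
        exact ⟨le_rfl, by gcongr; linarith⟩
      have hsc := sign_const hAc hcontA hsgn htA htkA
      obtain ⟨heq, _⟩ := lifts_unique (hliftsA t htA) (hLl t)
      rw [hsc] at heq
      exact heq
    have hcastsucc : ∀ k : ℕ, ((k+1 : ℕ) : ℝ) = (k:ℝ)+1 := fun k => by push_cast; ring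
    -- the sign at each node agrees for u and u₀
    have step4 : ∀ k, k < N → ∀ u ∈ W, ∀ L L' : I → E3,
        Continuous L → (∀ t, Lifts M (L t) (H (t, u))) → L 0 = v₀ →
        Continuous L' → (∀ t, Lifts M (L' t) (H (t, u₀))) → L' 0 = v₀ →
        sig k u L = sig k u₀ L' := by
      intro k
      induction k with
      | zero =>
        intro _ u hu L L' _ _ hL0' _ _ hL'0
        have ht0 : tI 0 = 0 := by
          apply Subtype.ext
          show min (((0:ℕ):ℝ)/N) 1 = ((0:I):ℝ)
          simp
        rw [hsig]
        simp only [ht0, hL0', hL'0]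
        rw [h0 u, h0 u₀]
      | succ k ih =>
        intro hk u hu L L' hLc hLl hL0' hL'c hL'l hL'0
        have hkN : k < N := Nat.lt_of_succ_lt hk
        have htco : ((tI (k+1) : I) : ℝ) = ((k:ℝ)+1)/N := by
          rw [htI (k+1) hk.le, hcastsucc]
        have hrel : ∀ w, w ∈ W → ∀ Lw : I → E3, Continuous Lw →
            (∀ t, Lifts M (Lw t) (H (t, w))) →
            sig (k+1) w Lw =
              dot3 (g (k+1) (H (tI (k+1), w))) (g k (H (tI (k+1), w))) * sig k w Lw := by
          intro w hw Lw hLwc hLwl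
          have hstep := step1 w hw Lw hLwc hLwl k hkN (tI (k+1))
            (by rw [htco]; gcongr; linarith) (by rw [htco])
          show dot3 (g (k+1) (H (tI (k+1), w))) (Lw (tI (k+1))) = _
          rw [hstep, dot3_smul_right]
          ring
        have hceq : dot3 (g (k+1) (H (tI (k+1), u))) (g k (H (tI (k+1), u))) =
            dot3 (g (k+1) (H (tI (k+1), u₀))) (g k (H (tI (k+1), u₀))) := by
          obtain ⟨⟨_, hgc1, hgl1⟩, hmem1⟩ := hchain k hkN
          obtain ⟨⟨_, hgc2, hgl2⟩, hmem2⟩ := hchain (k+1) hk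
          have hmm : ∀ w ∈ W, H (tI (k+1), w) ∈ U k ∧ H (tI (k+1), w) ∈ U (k+1) := by
            intro w hw
            constructor
            · exact hmem1 w hw _ (by rw [htco]; gcongr; linarith) (by rw [htco])
            · refine hmem2 w hw _ ?_ ?_
              · rw [htco, hcastsucc]
              · rw [htco, hcastsucc]
                gcongr
                linarith
          have hHcont : Continuous fun w : I => H (tI (k+1), w) :=
            hH.comp (continuous_const.prodMk continuous_id)
          apply sign_const hWc
            (continuousOn_dot3
              (hgc2.comp hHcont.continuousOn (fun w hw => (hmm w hw).2))
              (hgc1.comp hHcont.continuousOn (fun w hw => (hmm w hw).1)))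
            (fun w hw => (lifts_unique (hgl2 _ (hmm w hw).2) (hgl1 _ (hmm w hw).1)).2)
            hu hu₀W
        rw [hrel u hu L hLc hLl, hrel u₀ hu₀W L' hL'c hL'l, hceq,
          ih hkN u hu L L' hLc hLl hL0' hL'c hL'l hL'0]
    -- conclude local constancy
    intro u hu
    have hN1 : N - 1 < N := Nat.sub_lt hN one_pos
    have hcastN : ((N-1 : ℕ):ℝ) = (N:ℝ) - 1 := by
      push_cast [Nat.cast_sub hN]
      ring
    have hfin : ∀ w ∈ W, ∀ Lw : I → E3, Continuous Lw →
        (∀ t, Lifts M (Lw t) (H (t, w))) →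
        Lw 1 = sig (N-1) w Lw • g (N-1) (H (1, w)) := by
      intro w hw Lw hc hl
      refine step1 w hw Lw hc hl (N-1) hN1 1 ?_ ?_
      · show ((N-1:ℕ):ℝ)/N ≤ ((1:I):ℝ)
        rw [hcastN]
        show ((N:ℝ)-1)/N ≤ 1
        rw [div_le_one hN0]
        linarith
      · show ((1:I):ℝ) ≤ (((N-1:ℕ):ℝ)+1)/N
        rw [hcastN]
        have : ((N:ℝ)-1+1)/N = 1 := by field_simp; ring
        rw [this]
        norm_num
    rw [he]
    simp only
    rw [hfin u hu (Lf u) (hLfc u) (hLfl u), hfin u₀ hu₀W (Lf u₀) (hLfc u₀) (hLfl u₀),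
      h1 u, h1 u₀,
      step4 (N-1) hN1 u hu (Lf u) (Lf u₀) (hLfc u) (hLfl u) (hLf0 u) (hLfc u₀) (hLfl u₀) (hLf0 u₀)]
  -- clopen argument on the unit interval of homotopy parameters
  have hS : ∀ u : I, e u = e 0 := by
    intro w
    by_contra hw
    set S : Set I := {u : I | e u = e 0} with hSdef
    set S' : Set I := {u : I | ¬ e u = e 0} with hS'def
    have hSo : IsOpen S := by
      rw [Metric.isOpen_iff]
      intro u huS
      obtain ⟨r, hr, hloc⟩ := loc u
      exact ⟨r, hr, fun z hz => by
        show e z = e 0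
        rw [hloc z (Metric.mem_ball.mp hz)]
        exact huS⟩
    have hS'o : IsOpen S' := by
      rw [Metric.isOpen_iff]
      intro u huS
      obtain ⟨r, hr, hloc⟩ := loc u
      exact ⟨r, hr, fun z hz => by
        show ¬ e z = e 0
        rw [hloc z (Metric.mem_ball.mp hz)]
        exact huS⟩
    obtain ⟨z, _, hz1, hz2⟩ := hpreI S S' hSo hS'o
      (fun u _ => by by_cases h : e u = e 0; exacts [Or.inl h, Or.inr h])
      ⟨0, mem_univ 0, rfl⟩ ⟨w, mem_univ w, hw⟩
    exact hz2 hz1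
  have hA := uniq (fun t => H (t, 0)) (Lf 0) L₀ (hLfc 0) hL₀c (hLfl 0) hL₀
    (by rw [hLf0 0, hL₀0])
  have hB := uniq (fun t => H (t, 1)) (Lf 1) L₁ (hLfc 1) hL₁c (hLfl 1) hL₁
    (by rw [hLf0 1, hL₁0])
  rw [← hA, ← hB]
  exact (hS 1).symm

end Lifting

end

end Stmt6Aux

/-- `P(n) = s (n⊗n − (1/3) Id)`. -/
noncomputable def Pmat (s : ℝ) (n : Fin 3 → ℝ) : Matrix (Fin 3) (Fin 3) ℝ :=
  s • (Matrix.vecMulVec n n - (1 / 3 : ℝ) • (1 : Matrix (Fin 3) (Fin 3) ℝ))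

/-- a continuous `𝒬`-valued map on an open, connected, simply connected
subset of `ℝ^d` admits a continuous lifting to `𝕊²`. -/
theorem stmt6 (s : ℝ) (hs : s ≠ 0) (hs' : s ∈ Set.Icc (-(1 / 2) : ℝ) 1)
    (d : ℕ) (Ω : Set (EuclideanSpace ℝ (Fin d)))
    (hopen : IsOpen Ω) (hconn : IsConnected Ω) (hsc : SimplyConnectedSpace Ω)
    (Q : Ω → Matrix (Fin 3) (Fin 3) ℝ) (hQc : Continuous Q)
    (hQval : ∀ x, ∃ m : EuclideanSpace ℝ (Fin 3), ‖m‖ = 1 ∧ Q x = Pmat s (fun i => m i)) :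
    ∃ n : Ω → EuclideanSpace ℝ (Fin 3), Continuous n ∧
      ∀ x, ‖n x‖ = 1 ∧ Q x = Pmat s (fun i => n x i) := by
  classical
  haveI := hsc
  open Stmt6Aux in
  set M : Ω → Matrix (Fin 3) (Fin 3) ℝ :=
    fun x => s⁻¹ • Q x + (3⁻¹ : ℝ) • (1 : Matrix (Fin 3) (Fin 3) ℝ) with hM
  have hPmat : ∀ (A : Matrix (Fin 3) (Fin 3) ℝ) (m : Stmt6Aux.E3),
      A = Pmat s (fun i => m i) ↔
        s⁻¹ • A + (3⁻¹ : ℝ) • (1 : Matrix (Fin 3) (Fin 3) ℝ) = Stmt6Aux.outer3 m := by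
    intro A m
    constructor
    · rintro rfl
      show s⁻¹ • (s • (Matrix.vecMulVec (fun i => m i) (fun i => m i) -
        (1/3 : ℝ) • (1 : Matrix (Fin 3) (Fin 3) ℝ))) + (3⁻¹:ℝ) • 1 = _
      rw [smul_smul, inv_mul_cancel₀ hs, one_smul, one_div, sub_add_cancel]
      rfl
    · intro h
      have hA : A = s • (s⁻¹ • A + (3⁻¹:ℝ) • (1 : Matrix (Fin 3) (Fin 3) ℝ) -
          (3⁻¹:ℝ) • (1 : Matrix (Fin 3) (Fin 3) ℝ)) := by
        rw [add_sub_cancel_right, smul_smul, mul_inv_cancel₀ hs, one_smul]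
      rw [hA, h]
      show _ = s • (Matrix.vecMulVec (fun i => m i) (fun i => m i) -
        (1/3 : ℝ) • (1 : Matrix (Fin 3) (Fin 3) ℝ))
      rw [one_div]
      rfl
  have hMc : Continuous M := by rw [hM]; fun_prop
  have hval : ∀ x, ∃ m : Stmt6Aux.E3, ‖m‖ = 1 ∧ M x = Stmt6Aux.outer3 m := by
    intro x
    obtain ⟨m, hm1, hm2⟩ := hQval x
    exact ⟨m, hm1, (hPmat _ m).mp hm2⟩
  obtain ⟨bv, hbv⟩ := hconn.nonempty
  set b : Ω := ⟨bv, hbv⟩ with hb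
  have hpc : IsPathConnected Ω := hopen.isConnected_iff_isPathConnected.mp hconn
  have hjoin : ∀ x : Ω, Joined b x := fun x => (hpc.joinedIn bv hbv x.1 x.2).joined_subtype
  obtain ⟨v₀, hv₀⟩ : ∃ v₀, Stmt6Aux.Lifts M v₀ b := by
    obtain ⟨m, h1, h2⟩ := hval b
    exact ⟨m, h1, h2⟩
  set pathTo : (x : Ω) → Path b x := fun x => (hjoin x).somePath with hpathTo
  have hlift : ∀ x : Ω, ∃ L : unitInterval → Stmt6Aux.E3, Continuous L ∧ L 0 = v₀ ∧
      ∀ t, Stmt6Aux.Lifts M (L t) (pathTo x t) := by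
    intro x
    exact Stmt6Aux.exists_pathLift hMc hval (pathTo x).continuous
      (by rw [(pathTo x).source]; exact hv₀)
  choose L hLc hL0 hLl using hlift
  set nn : Ω → Stmt6Aux.E3 := fun x => L x 1 with hnn
  have hnl : ∀ x, Stmt6Aux.Lifts M (nn x) x := fun x => by
    have h := hLl x 1
    rwa [(pathTo x).target] at h
  have hcont : Continuous nn := by
    rw [continuous_iff_continuousAt]
    intro x
    obtain ⟨U, g, ⟨hUo, hgc, hgl⟩, hxU⟩ := Stmt6Aux.exists_localLift hMc hval x
    obtain ⟨O, hOo, hOU⟩ := isOpen_induced_iff.mp hUo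
    have hxO : (x : EuclideanSpace ℝ (Fin d)) ∈ O ∩ Ω :=
      ⟨by rw [← hOU] at hxU; exact hxU, x.2⟩
    obtain ⟨ε, hε, hball⟩ := Metric.isOpen_iff.mp (hOo.inter hopen) _ hxO
    set B : Set Ω := Subtype.val ⁻¹' Metric.ball (x : EuclideanSpace ℝ (Fin d)) ε with hB
    have hBU : B ⊆ U := fun y hy => by
      rw [← hOU]; exact (hball hy).1
    have hxB : x ∈ B := by
      show (x : EuclideanSpace ℝ (Fin d)) ∈ Metric.ball _ _
      exact Metric.mem_ball_self hε
    set sg : ℝ := Stmt6Aux.dot3 (g x) (nn x) with hsg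
    obtain ⟨hsg1, hsg2⟩ := Stmt6Aux.lifts_unique (hgl x hxU) (hnl x)
    have heqB : ∀ y ∈ B, nn y = sg • g y := by
      intro y hy
      have hsegmem : ∀ t : unitInterval, (1 - (t:ℝ)) • (x : EuclideanSpace ℝ (Fin d)) +
          (t:ℝ) • (y : EuclideanSpace ℝ (Fin d)) ∈
          Metric.ball (x : EuclideanSpace ℝ (Fin d)) ε := by
        intro t
        exact (convex_ball _ _) (Metric.mem_ball_self hε) hy
          (by linarith [t.2.2]) t.2.1 (by ring)
      set seg : Path x y :=
        { toFun := fun t => ⟨(1 - (t:ℝ)) • (x : EuclideanSpace ℝ (Fin d)) +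
            (t:ℝ) • (y : EuclideanSpace ℝ (Fin d)), (hball (hsegmem t)).2⟩
          continuous_toFun := by
            apply Continuous.subtype_mk
            exact ((continuous_const.sub continuous_subtype_val).smul continuous_const).add
              (continuous_subtype_val.smul continuous_const)
          source' := by apply Subtype.ext; simp
          target' := by apply Subtype.ext; simp } with hseg
      have hsegB : ∀ t, seg t ∈ B := fun t => hsegmem t
      have hsegU : ∀ t, seg t ∈ U := fun t => hBU (hsegB t)
      set st1 : unitInterval → unitInterval := fun t => ⟨min (2*(t:ℝ)) 1,
        le_min (by linarith [t.2.1]) zero_le_one, min_le_right _ _⟩ with hst1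
      set st2 : unitInterval → unitInterval := fun t => ⟨max 0 (2*(t:ℝ)-1),
        le_max_left _ _, max_le zero_le_one (by linarith [t.2.2])⟩ with hst2
      have hst1c : Continuous st1 := Continuous.subtype_mk
        ((continuous_const.mul continuous_subtype_val).min continuous_const) _
      have hst2c : Continuous st2 := Continuous.subtype_mk
        (continuous_const.max ((continuous_const.mul continuous_subtype_val).sub
          continuous_const)) _
      set Ltr : unitInterval → Stmt6Aux.E3 :=
        fun t => if (t:ℝ) ≤ 1/2 then L x (st1 t) else sg • g (seg (st2 t)) with hLtr
      have hLtrc : Continuous Ltr := by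
        apply Continuous.if_le ((hLc x).comp hst1c)
          ((hgc.comp_continuous (seg.continuous.comp hst2c) (fun t => hsegU _)).const_smul sg)
          continuous_subtype_val continuous_const
        intro t ht
        have h1' : st1 t = 1 := by
          apply Subtype.ext
          show min (2*(t:ℝ)) 1 = ((1:unitInterval):ℝ)
          rw [ht]; norm_num
        have h2' : st2 t = 0 := by
          apply Subtype.ext
          show max 0 (2*(t:ℝ)-1) = ((0:unitInterval):ℝ)
          rw [ht]; norm_num
        show L x (st1 t) = sg • g (seg (st2 t))
        rw [h1', h2', seg.source]
        exact hsg1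
      have hLtr0 : Ltr 0 = v₀ := by
        show (if ((0:unitInterval):ℝ) ≤ 1/2 then L x (st1 0) else _) = v₀
        rw [if_pos (by norm_num)]
        have : st1 0 = 0 := by
          apply Subtype.ext
          show min (2*((0:unitInterval):ℝ)) 1 = ((0:unitInterval):ℝ)
          norm_num
        rw [this]; exact hL0 x
      have hLtrl : ∀ t, Stmt6Aux.Lifts M (Ltr t) (((pathTo x).trans seg) t) := by
        intro t
        rw [Path.trans_apply]
        show Stmt6Aux.Lifts M (if (t:ℝ) ≤ 1/2 then L x (st1 t) else sg • g (seg (st2 t))) _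
        by_cases ht : (t:ℝ) ≤ 1/2
        · rw [if_pos ht, dif_pos ht]
          have : st1 t = ⟨2*(t:ℝ), by constructor <;> [linarith [t.2.1]; linarith]⟩ := by
            apply Subtype.ext
            show min (2*(t:ℝ)) 1 = 2*(t:ℝ)
            exact min_eq_left (by linarith)
          rw [this]
          exact hLl x _
        · push_neg at ht
          rw [if_neg (not_le.mpr ht), dif_neg (not_le.mpr ht)]
          have : st2 t = ⟨2*(t:ℝ)-1, by constructor <;> [linarith; linarith [t.2.2]]⟩ := by
            apply Subtype.ext
            show max 0 (2*(t:ℝ)-1) = 2*(t:ℝ)-1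
            exact max_eq_right (by linarith)
          rw [this]
          exact Stmt6Aux.Lifts.smul (hgl _ (hsegU _)) hsg2
      -- homotopy between the two paths from b to y
      obtain ⟨F⟩ := SimplyConnectedSpace.paths_homotopic (pathTo y) ((pathTo x).trans seg)
      set H : unitInterval × unitInterval → Ω := fun q => F (q.2, q.1) with hH
      have hHc : Continuous H := F.continuous.comp (continuous_snd.prodMk continuous_fst)
      have hH0 : ∀ u, H (0, u) = H (0, 0) := fun u => by
        show F (u, 0) = F (0, 0)
        rw [F.source, F.source]
      have hH1 : ∀ u, H (1, u) = H (1, 0) := fun u => by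
        show F (u, 1) = F (0, 1)
        rw [F.target, F.target]
      have hv₀' : Stmt6Aux.Lifts M v₀ (H (0, 0)) := by
        show Stmt6Aux.Lifts M v₀ (F (0, 0))
        rw [F.source]
        exact hv₀
      have hLy : ∀ t, Stmt6Aux.Lifts M (L y t) (H (t, 0)) := by
        intro t
        show Stmt6Aux.Lifts M (L y t) (F (0, t))
        rw [F.apply_zero]
        exact hLl y t
      have hLtr' : ∀ t, Stmt6Aux.Lifts M (Ltr t) (H (t, 1)) := by
        intro t
        show Stmt6Aux.Lifts M (Ltr t) (F (1, t))
        rw [F.apply_one]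
        exact hLtrl t
      have hend := Stmt6Aux.lift_endpoint_eq hMc hval hHc hH0 hH1 hv₀'
        (hLc y) (hL0 y) hLy hLtrc hLtr0 hLtr'
      -- hend : L y 1 = Ltr 1
      have hLtr1 : Ltr 1 = sg • g y := by
        show (if ((1:unitInterval):ℝ) ≤ 1/2 then L x (st1 1) else sg • g (seg (st2 1))) = _
        rw [if_neg (by norm_num)]
        have : st2 1 = 1 := by
          apply Subtype.ext
          show max 0 (2*((1:unitInterval):ℝ)-1) = ((1:unitInterval):ℝ)
          norm_num
        rw [this, seg.target]
      show nn y = sg • g y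
      rw [hnn]
      show L y 1 = sg • g y
      rw [hend, hLtr1]
    have hBnhds : B ∈ nhds x :=
      ((Metric.isOpen_ball).preimage continuous_subtype_val).mem_nhds hxB
    have hgat : ContinuousAt (fun y => sg • g y) x :=
      (hgc.continuousAt (hUo.mem_nhds hxU)).const_smul sg
    exact hgat.congr (Filter.eventuallyEq_of_mem hBnhds (fun y hy => (heqB y hy).symm))
  refine ⟨nn, hcont, fun x => ⟨(hnl x).1, ?_⟩⟩
  exact (hPmat (Q x) (nn x)).mpr (hnl x).2
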